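/- arXiv:1103.4072 — 3 statements merged into one kernel-verified Lean document; each statement's English description precedes it below -/
import Mathlib

section
/- For symmetric matrices A (n×n) and B (k×k) with nonnegative entries and matrices S, S' of size n×k with strictly positive entries, the inequality ∑_{i=1}^n ∑_{p=1}^k (A S' B)_{ip} S_{ip}² / S'_{ip} ≥ Tr(S^T A S B) holds. -/
open Matrix BigOperators

private lemma key_amgm (c x y u v : ℝ) (hc : 0 ≤ c) (hu : 0 < u) (hv : 0 < v) :
    2 * (c * (x * y)) ≤ c * (v * x^2 / u) + c * (u * y^2 / v) := by
  rw [mul_div_assoc', mul_div_assoc', div_add_div _ _ hu.ne' hv.ne',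
    le_div_iff₀ (mul_pos hu hv)]
  nlinarith [mul_nonneg hc (sq_nonneg (x*v - y*u)), sq_nonneg (x*v-y*u), mul_pos hu hv]

theorem stmt_9 (n k : ℕ) (A : Matrix (Fin n) (Fin n) ℝ) (hA : A.IsSymm)
    (hAnn : ∀ i j, 0 ≤ A i j)
    (B : Matrix (Fin k) (Fin k) ℝ) (hB : B.IsSymm)
    (hBnn : ∀ i j, 0 ≤ B i j)
    (S S' : Matrix (Fin n) (Fin k) ℝ)
    (hS : ∀ i p, 0 < S i p) (hS' : ∀ i p, 0 < S' i p) :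
    Matrix.trace (Sᵀ * A * S * B) ≤
      ∑ i : Fin n, ∑ p : Fin k, (A * S' * B) i p * (S i p) ^ 2 / S' i p := by
  set F : (Fin n × Fin k) → (Fin n × Fin k) → ℝ := fun a b =>
    A a.1 b.1 * S' b.1 b.2 * B b.2 a.2 * S a.1 a.2 ^ 2 / S' a.1 a.2 with hF
  set G : (Fin n × Fin k) → (Fin n × Fin k) → ℝ := fun a b =>
    A a.1 b.1 * S b.1 b.2 * B b.2 a.2 * S a.1 a.2 with hG
  have hR : (∑ i : Fin n, ∑ p : Fin k, (A * S' * B) i p * (S i p) ^ 2 / S' i p)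
      = ∑ a : Fin n × Fin k, ∑ b : Fin n × Fin k, F a b := by
    rw [Fintype.sum_prod_type]
    refine Finset.sum_congr rfl fun i _ => Finset.sum_congr rfl fun p _ => ?_
    rw [Fintype.sum_prod_type]
    simp only [hF, Matrix.mul_apply, Finset.sum_mul, Finset.sum_div]
    rw [Finset.sum_comm]
  have hL : Matrix.trace (Sᵀ * A * S * B)
      = ∑ a : Fin n × Fin k, ∑ b : Fin n × Fin k, G a b := by
    rw [← Fintype.sum_prod_type']
    simp only [Matrix.trace, Matrix.diag, Matrix.mul_apply, Matrix.transpose_apply,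
      Finset.sum_mul, Finset.mul_sum]
    rw [Fintype.sum_equiv
      (⟨fun a => (a.1.2, a.2.2, a.2.1, a.1.1),
       fun x => ((x.2.2.2, x.1), (x.2.2.1, x.2.1)), fun _ => rfl, fun _ => rfl⟩ :
        ((Fin n × Fin k) × Fin n × Fin k) ≃ (Fin k × Fin k × Fin n × Fin n))
      (fun x => G x.1 x.2)
      (fun y => S y.2.2.2 y.1 * A y.2.2.2 y.2.2.1 * S y.2.2.1 y.2.1 * B y.2.1 y.1)
      (fun x => by simp only [hG, Equiv.coe_fn_mk]; ring)]
    simp only [Fintype.sum_prod_type]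
  rw [hL, hR]
  have hswap : (∑ a : Fin n × Fin k, ∑ b : Fin n × Fin k, F a b)
      = ∑ a : Fin n × Fin k, ∑ b : Fin n × Fin k, F b a := Finset.sum_comm
  have h2 : 2 * (∑ a : Fin n × Fin k, ∑ b : Fin n × Fin k, G a b)
      ≤ 2 * (∑ a : Fin n × Fin k, ∑ b : Fin n × Fin k, F a b) := by
    calc 2 * (∑ a : Fin n × Fin k, ∑ b : Fin n × Fin k, G a b)
        = ∑ a : Fin n × Fin k, ∑ b : Fin n × Fin k, 2 * G a b := by
          rw [Finset.mul_sum]; exact Finset.sum_congr rfl fun a _ => Finset.mul_sum _ _ _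
      _ ≤ ∑ a : Fin n × Fin k, ∑ b : Fin n × Fin k, (F a b + F b a) := by
          refine Finset.sum_le_sum fun a _ => Finset.sum_le_sum fun b _ => ?_
          have hFab : F a b = (A a.1 b.1 * B b.2 a.2) * (S' b.1 b.2 * S a.1 a.2 ^ 2 / S' a.1 a.2) := by
            simp only [hF]; ring
          have hFba : F b a = (A a.1 b.1 * B b.2 a.2) * (S' a.1 a.2 * S b.1 b.2 ^ 2 / S' b.1 b.2) := by
            simp only [hF, hA.apply b.1 a.1, hB.apply a.2 b.2]; ring
          have hGab : G a b = A a.1 b.1 * B b.2 a.2 * (S a.1 a.2 * S b.1 b.2) := by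
            simp only [hG]; ring
          rw [hFab, hFba, hGab]
          exact key_amgm _ _ _ _ _ (mul_nonneg (hAnn _ _) (hBnn _ _))
            (hS' a.1 a.2) (hS' b.1 b.2)
      _ = 2 * (∑ a : Fin n × Fin k, ∑ b : Fin n × Fin k, F a b) := by
          simp only [Finset.sum_add_distrib]
          rw [← hswap]; ring
  linarith
end

section
/- If Q ∈ ℝ^{n×K} is a fixed point of the multiplicative update Q_{ik} ← Q_{ik} √[((ρI + M⁻)Q + QΛ⁻)_{ik} / ((M⁺Q + QΛ⁺)_{ik})] with positive entries and positive denominators, then ((ρI - M)Q - QΛ)_{ik} Q_{ik}² = 0 for all i,k, which in turn implies the KKT complementary slackness condition ((ρI - M)Q - QΛ)_{ik} Q_{ik} = 0. -/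
open Matrix BigOperators

theorem stmt_16 (n K : ℕ) (M : Matrix (Fin n) (Fin n) ℝ) (hM : M.IsSymm)
    (Lam : Matrix (Fin K) (Fin K) ℝ) (hLam : Lam.IsSymm) (rho : ℝ)
    (Mp Mm : Matrix (Fin n) (Fin n) ℝ)
    (hMp : ∀ i j, Mp i j = (|M i j| + M i j) / 2)
    (hMm : ∀ i j, Mm i j = (|M i j| - M i j) / 2)
    (Lp Lm : Matrix (Fin K) (Fin K) ℝ)
    (hLp : ∀ k l, Lp k l = (|Lam k l| + Lam k l) / 2)
    (hLm : ∀ k l, Lm k l = (|Lam k l| - Lam k l) / 2)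
    (Q : Matrix (Fin n) (Fin K) ℝ)
    (hQnn : ∀ i k, 0 ≤ Q i k)
    (hden : ∀ i k, 0 < (Mp * Q + Q * Lp) i k)
    (hfix : ∀ i k, (Q i k) ^ 2 * (Mp * Q + Q * Lp) i k =
      (Q i k) ^ 2 * ((rho • (1 : Matrix (Fin n) (Fin n) ℝ) + Mm) * Q + Q * Lm) i k) :
    (∀ i k, ((rho • (1 : Matrix (Fin n) (Fin n) ℝ) - M) * Q - Q * Lam) i k
        * (Q i k) ^ 2 = 0) ∧
    (∀ i k, ((rho • (1 : Matrix (Fin n) (Fin n) ℝ) - M) * Q - Q * Lam) i k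
        * Q i k = 0) := by
  have hMeq : M = Mp - Mm := by
    ext i j; simp [hMp, hMm]; ring
  have hLeq : Lam = Lp - Lm := by
    ext k l; simp [hLp, hLm]; ring
  have hmat : (rho • (1 : Matrix (Fin n) (Fin n) ℝ) - M) * Q - Q * Lam =
      ((rho • (1 : Matrix (Fin n) (Fin n) ℝ) + Mm) * Q + Q * Lm) - (Mp * Q + Q * Lp) := by
    rw [hMeq, hLeq]
    simp only [Matrix.sub_mul, Matrix.add_mul, Matrix.mul_sub, Matrix.mul_add]
    abel
  have h1 : ∀ i k, ((rho • (1 : Matrix (Fin n) (Fin n) ℝ) - M) * Q - Q * Lam) i k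
      * (Q i k) ^ 2 = 0 := by
    intro i k
    rw [hmat]
    have := hfix i k
    simp only [Matrix.sub_apply]
    nlinarith [this]
  refine ⟨h1, fun i k => ?_⟩
  rcases eq_or_ne (Q i k) 0 with h | h
  · simp [h]
  · have := h1 i k
    have hq2 : (Q i k) ^ 2 ≠ 0 := pow_ne_zero _ h
    have hx : ((rho • (1 : Matrix (Fin n) (Fin n) ℝ) - M) * Q - Q * Lam) i k = 0 := by
      exact (mul_eq_zero.mp this).resolve_right hq2
    simp [hx]
end

section
/- Under the same setup, Z(H,H̃) ≤ L(H) for all H, H̃ with strictly positive entries; i.e., Z is an auxiliary function minorizing L, with equality at H = H̃. -/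
open Matrix BigOperators

private lemma rot3' {α β γ : Type*} [Fintype α] [Fintype β] [Fintype γ] (f : α → β → γ → ℝ) :
    ∑ a, ∑ b, ∑ c, f a b c = ∑ b, ∑ c, ∑ a, f a b c := by
  rw [Finset.sum_comm]
  exact Finset.sum_congr rfl fun b _ => Finset.sum_comm

private lemma swap23' {α β γ : Type*} [Fintype α] [Fintype β] [Fintype γ] (f : α → β → γ → ℝ) :
    ∑ a, ∑ b, ∑ c, f a b c = ∑ a, ∑ c, ∑ b, f a b c :=
  Finset.sum_congr rfl fun _ _ => Finset.sum_comm

private lemma traceHBH' {n K : ℕ} (B : Matrix (Fin n) (Fin n) ℝ) (H : Matrix (Fin n) (Fin K) ℝ) :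
    Matrix.trace (Hᵀ * B * H) = ∑ i, ∑ j, ∑ k, B i j * H i k * H j k := by
  simp only [Matrix.trace, Matrix.mul_apply, Matrix.diag, Matrix.transpose_apply,
    Finset.sum_mul, Finset.mul_sum]
  rw [rot3', rot3']
  refine Finset.sum_congr rfl fun i _ => ?_
  rw [Finset.sum_comm]
  exact Finset.sum_congr rfl fun j _ => Finset.sum_congr rfl fun k _ => by ring

private lemma traceCHH' {n K : ℕ} (C : Matrix (Fin K) (Fin K) ℝ) (H : Matrix (Fin n) (Fin K) ℝ) :
    Matrix.trace (C * (Hᵀ * H)) = ∑ i, ∑ k, ∑ l, C k l * H i k * H i l := by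
  simp only [Matrix.trace, Matrix.mul_apply, Matrix.diag, Matrix.transpose_apply,
    Finset.sum_mul, Finset.mul_sum]
  rw [rot3', rot3']
  exact Finset.sum_congr rfl fun i _ => Finset.sum_congr rfl fun k _ =>
    Finset.sum_congr rfl fun l _ => by ring

private lemma keysc' (c a b x y : ℝ) (hc : 0 ≤ c) (hx : 0 < x) (hy : 0 < y) :
    c * a * b + c * b * a ≤ c * y * a ^ 2 / x + c * x * b ^ 2 / y := by
  have h : c * y * a ^ 2 / x + c * x * b ^ 2 / y - (c * a * b + c * b * a)
      = c * (a * y - b * x) ^ 2 / (x * y) := by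
    field_simp
    ring
  have h2 : 0 ≤ c * (a * y - b * x) ^ 2 / (x * y) := by positivity
  linarith

private lemma logsc' (c a b x y : ℝ) (hc : 0 ≤ c) (ha : 0 < a) (hb : 0 < b)
    (hx : 0 < x) (hy : 0 < y) :
    c * x * y * (1 + Real.log (a * b / (x * y))) ≤ c * a * b := by
  have hz : 0 < a * b / (x * y) := by positivity
  have hl := Real.log_le_sub_one_of_pos hz
  have h1 : 1 + Real.log (a * b / (x * y)) ≤ a * b / (x * y) := by linarith
  have h2 : c * x * y * (1 + Real.log (a * b / (x * y))) ≤ c * x * y * (a * b / (x * y)) :=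
    mul_le_mul_of_nonneg_left h1 (by positivity)
  have h3 : c * x * y * (a * b / (x * y)) = c * a * b := by
    field_simp
  linarith

private lemma double_bound' {ι κ : Type*} [Fintype ι] [Fintype κ] (C : ι → ι → ℝ)
    (hC0 : ∀ i j, 0 ≤ C i j) (hCs : ∀ i j, C i j = C j i)
    (P Q : ι → κ → ℝ) (hP : ∀ i k, 0 < P i k) (hQ : ∀ i k, 0 < Q i k) :
    ∑ i, ∑ j, ∑ k, C i j * P i k * P j k ≤ ∑ i, ∑ j, ∑ k, C i j * Q j k * P i k ^ 2 / Q i k := by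
  have e1 : ∑ i, ∑ j, ∑ k, C i j * P i k * P j k
      = ∑ i, ∑ j, ∑ k, C j i * P j k * P i k := Finset.sum_comm
  have e2 : ∑ i, ∑ j, ∑ k, C i j * Q j k * P i k ^ 2 / Q i k
      = ∑ i, ∑ j, ∑ k, C j i * Q i k * P j k ^ 2 / Q j k := Finset.sum_comm
  have key : ∑ i, ∑ j, ∑ k, (C i j * P i k * P j k + C j i * P j k * P i k)
      ≤ ∑ i, ∑ j, ∑ k, (C i j * Q j k * P i k ^ 2 / Q i k + C j i * Q i k * P j k ^ 2 / Q j k) := by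
    refine Finset.sum_le_sum fun i _ => Finset.sum_le_sum fun j _ =>
      Finset.sum_le_sum fun k _ => ?_
    rw [hCs j i]
    exact keysc' (C i j) (P i k) (P j k) (Q i k) (Q j k) (hC0 i j) (hQ i k) (hQ j k)
  simp only [Finset.sum_add_distrib] at key
  linarith

theorem stmt_19 (n K : ℕ) (M : Matrix (Fin n) (Fin n) ℝ) (hM : M.IsSymm)
    (Lam : Matrix (Fin K) (Fin K) ℝ) (hLam : Lam.IsSymm) (rho : ℝ) (hrho : 0 ≤ rho)
    (Mp Mm : Matrix (Fin n) (Fin n) ℝ)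
    (hMp : ∀ i j, Mp i j = (|M i j| + M i j) / 2)
    (hMm : ∀ i j, Mm i j = (|M i j| - M i j) / 2)
    (Lp Lm : Matrix (Fin K) (Fin K) ℝ)
    (hLp : ∀ k l, Lp k l = (|Lam k l| + Lam k l) / 2)
    (hLm : ∀ k l, Lm k l = (|Lam k l| - Lam k l) / 2)
    (Z : Matrix (Fin n) (Fin K) ℝ → Matrix (Fin n) (Fin K) ℝ → ℝ)
    (hZ : ∀ H Ht, Z H Ht =
      (∑ i, ∑ j, ∑ k, (rho * (if i = j then (1:ℝ) else 0) + Mm i j)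
          * Ht i k * Ht j k
          * (1 + Real.log (H i k * H j k / (Ht i k * Ht j k))))
      + (∑ i, ∑ k, ∑ l, Lm k l * Ht i k * Ht i l
          * (1 + Real.log (H i k * H i l / (Ht i k * Ht i l))))
      - (∑ i, ∑ k, (Mp * Ht) i k * (H i k) ^ 2 / Ht i k)
      - (∑ i, ∑ k, (Ht * Lp) i k * (H i k) ^ 2 / Ht i k))
    (L : Matrix (Fin n) (Fin K) ℝ → ℝ)
    (hL : ∀ H, L H = Matrix.trace
      (Hᵀ * (rho • (1 : Matrix (Fin n) (Fin n) ℝ) + Mm) * H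
        + Lm * (Hᵀ * H) - Hᵀ * Mp * H - Lp * (Hᵀ * H))) :
    ∀ H Ht : Matrix (Fin n) (Fin K) ℝ,
      (∀ i k, 0 < H i k) → (∀ i k, 0 < Ht i k) →
      Z H Ht ≤ L H ∧ Z H H = L H := by

  intro H Ht hH hHt
  -- entrywise nonnegativity and symmetry facts
  have hMm0 : ∀ i j, 0 ≤ Mm i j := fun i j => by
    rw [hMm]; linarith [le_abs_self (M i j)]
  have hMp0 : ∀ i j, 0 ≤ Mp i j := fun i j => by
    rw [hMp]; linarith [neg_abs_le (M i j)]
  have hLm0 : ∀ k l, 0 ≤ Lm k l := fun k l => by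
    rw [hLm]; linarith [le_abs_self (Lam k l)]
  have hLp0 : ∀ k l, 0 ≤ Lp k l := fun k l => by
    rw [hLp]; linarith [neg_abs_le (Lam k l)]
  have hA0 : ∀ i j, 0 ≤ rho * (if i = j then (1:ℝ) else 0) + Mm i j := fun i j => by
    by_cases h' : i = j
    · subst h'; simp; linarith [hMm0 i i]
    · simp [h']; exact hMm0 i j
  have hMpS : ∀ i j, Mp i j = Mp j i := fun i j => by
    rw [hMp i j, hMp j i, hM.apply i j]
  have hLpS : ∀ k l, Lp k l = Lp l k := fun k l => by
    rw [hLp k l, hLp l k, hLam.apply k l]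
  -- expansion of L
  have hT : ∀ G : Matrix (Fin n) (Fin K) ℝ, L G =
      (∑ i, ∑ j, ∑ k, (rho * (if i = j then (1:ℝ) else 0) + Mm i j) * G i k * G j k)
      + (∑ i, ∑ k, ∑ l, Lm k l * G i k * G i l)
      - (∑ i, ∑ j, ∑ k, Mp i j * G i k * G j k)
      - (∑ i, ∑ k, ∑ l, Lp k l * G i k * G i l) := by
    intro G
    rw [hL, Matrix.trace_sub, Matrix.trace_sub, Matrix.trace_add, traceHBH', traceCHH',
      traceHBH', traceCHH']
    congr 3
  -- expansion of the Mp term of Z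
  have hS3 : ∀ Q : Matrix (Fin n) (Fin K) ℝ,
      (∑ i, ∑ k, (Mp * Q) i k * H i k ^ 2 / Q i k)
      = ∑ i, ∑ j, ∑ k, Mp i j * Q j k * H i k ^ 2 / Q i k := by
    intro Q
    refine Finset.sum_congr rfl fun i _ => ?_
    simp only [Matrix.mul_apply, Finset.sum_mul, Finset.sum_div]
    exact Finset.sum_comm
  -- expansion of the Lp term of Z
  have hS4 : ∀ Q : Matrix (Fin n) (Fin K) ℝ, (∀ i k, 0 < Q i k) →
      (∑ i, ∑ k, (Q * Lp) i k * H i k ^ 2 / Q i k)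
      = ∑ k, ∑ l, ∑ i, Lp k l * Q i l * H i k ^ 2 / Q i k := by
    intro Q _
    have h1 : (∑ i, ∑ k, (Q * Lp) i k * H i k ^ 2 / Q i k)
        = ∑ i, ∑ k, ∑ l, Lp k l * Q i l * H i k ^ 2 / Q i k := by
      refine Finset.sum_congr rfl fun i _ => Finset.sum_congr rfl fun k _ => ?_
      simp only [Matrix.mul_apply, Finset.sum_mul, Finset.sum_div]
      refine Finset.sum_congr rfl fun l _ => ?_
      rw [hLpS k l]; ring
    exact h1.trans (rot3' _)
  -- the inequalities
  have hlog1 : (∑ i, ∑ j, ∑ k, (rho * (if i = j then (1:ℝ) else 0) + Mm i j)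
          * Ht i k * Ht j k * (1 + Real.log (H i k * H j k / (Ht i k * Ht j k))))
      ≤ ∑ i, ∑ j, ∑ k, (rho * (if i = j then (1:ℝ) else 0) + Mm i j) * H i k * H j k := by
    refine Finset.sum_le_sum fun i _ => Finset.sum_le_sum fun j _ =>
      Finset.sum_le_sum fun k _ => ?_
    exact logsc' _ _ _ _ _ (hA0 i j) (hH i k) (hH j k) (hHt i k) (hHt j k)
  have hlog2 : (∑ i, ∑ k, ∑ l, Lm k l * Ht i k * Ht i l
          * (1 + Real.log (H i k * H i l / (Ht i k * Ht i l))))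
      ≤ ∑ i, ∑ k, ∑ l, Lm k l * H i k * H i l := by
    refine Finset.sum_le_sum fun i _ => Finset.sum_le_sum fun k _ =>
      Finset.sum_le_sum fun l _ => ?_
    exact logsc' _ _ _ _ _ (hLm0 k l) (hH i k) (hH i l) (hHt i k) (hHt i l)
  have hMpIneq : (∑ i, ∑ j, ∑ k, Mp i j * H i k * H j k)
      ≤ ∑ i, ∑ j, ∑ k, Mp i j * Ht j k * H i k ^ 2 / Ht i k :=
    double_bound' Mp hMp0 hMpS H Ht hH hHt
  have hLpIneq : (∑ k, ∑ l, ∑ i, Lp k l * H i k * H i l)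
      ≤ ∑ k, ∑ l, ∑ i, Lp k l * Ht i l * H i k ^ 2 / Ht i k :=
    double_bound' Lp hLp0 hLpS (fun k i => H i k) (fun k i => Ht i k)
      (fun k i => hH i k) (fun k i => hHt i k)
  have hT4rot : (∑ i, ∑ k, ∑ l, Lp k l * H i k * H i l)
      = ∑ k, ∑ l, ∑ i, Lp k l * H i k * H i l := rot3' _
  constructor
  · rw [hZ, hT H, hS3 Ht, hS4 Ht hHt]
    rw [hT4rot] at *
    linarith
  · -- equality at H = Ht
    have hq1 : (∑ i, ∑ j, ∑ k, (rho * (if i = j then (1:ℝ) else 0) + Mm i j)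
          * H i k * H j k * (1 + Real.log (H i k * H j k / (H i k * H j k))))
        = ∑ i, ∑ j, ∑ k, (rho * (if i = j then (1:ℝ) else 0) + Mm i j) * H i k * H j k := by
      refine Finset.sum_congr rfl fun i _ => Finset.sum_congr rfl fun j _ =>
        Finset.sum_congr rfl fun k _ => ?_
      rw [div_self (mul_pos (hH i k) (hH j k)).ne', Real.log_one, add_zero, mul_one]
    have hq2 : (∑ i, ∑ k, ∑ l, Lm k l * H i k * H i l
          * (1 + Real.log (H i k * H i l / (H i k * H i l))))
        = ∑ i, ∑ k, ∑ l, Lm k l * H i k * H i l := by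
      refine Finset.sum_congr rfl fun i _ => Finset.sum_congr rfl fun k _ =>
        Finset.sum_congr rfl fun l _ => ?_
      rw [div_self (mul_pos (hH i k) (hH i l)).ne', Real.log_one, add_zero, mul_one]
    have hq3 : (∑ i, ∑ j, ∑ k, Mp i j * H j k * H i k ^ 2 / H i k)
        = ∑ i, ∑ j, ∑ k, Mp i j * H i k * H j k := by
      refine Finset.sum_congr rfl fun i _ => Finset.sum_congr rfl fun j _ =>
        Finset.sum_congr rfl fun k _ => ?_
      have h := (hH i k).ne'
      field_simp
    have hq4 : (∑ k, ∑ l, ∑ i, Lp k l * H i l * H i k ^ 2 / H i k)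
        = ∑ k, ∑ l, ∑ i, Lp k l * H i k * H i l := by
      refine Finset.sum_congr rfl fun k _ => Finset.sum_congr rfl fun l _ =>
        Finset.sum_congr rfl fun i _ => ?_
      have h := (hH i k).ne'
      field_simp
    rw [hZ, hT H, hS3 H, hS4 H hH, hq1, hq2, hq3, hq4, hT4rot]
end
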